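/- Let f and g be character combination sequences with the same prime p. Then (1/(p(p−1)))·Σ_{a∈F_p} |PC_{per(f),per(g)}(a)|² = S_{f,g} + 1 + U_{f,g} + V_{f,g}. Moreover, if f = g, then S_{f,f} + 1 + U_{f,f} + V_{f,f} = S_{f,f} + 2 + V_{f,f} ≥ 1. -/

import Mathlib

open scoped BigOperators Classical ComplexOrder

noncomputable section

namespace Paper

/-- `Ω(x,y) = Σ_{n ∈ ℤ} max(0, 1 − |n·x − y|)²`. -/
def Omega (x y : ℝ) : ℝ := ∑' n : ℤ, max 0 (1 - |(n : ℝ) * x - y|) ^ 2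

/-- The extension of a finite sequence of length `ℓ` by zero to all of `ℤ`. -/
def ext (ℓ : ℕ) (f : ℕ → ℂ) (j : ℤ) : ℂ :=
  if 0 ≤ j ∧ j < (ℓ : ℤ) then f j.toNat else 0

/-- Aperiodic crosscorrelation `C_{f,g}(s)` of two sequences of length `ℓ` at shift `s`. -/
def XC (ℓ : ℕ) (f g : ℕ → ℂ) (s : ℤ) : ℂ :=
  ∑' j : ℤ, ext ℓ f j * (starRingEnd ℂ) (ext ℓ g (j + s))

/-- Crosscorrelation demerit factor `CDF(f,g)`. -/
def CDF (ℓ : ℕ) (f g : ℕ → ℂ) : ℝ :=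
  (∑' s : ℤ, norm (XC ℓ f g s) ^ 2) /
    (norm (XC ℓ f f 0) * norm (XC ℓ g g 0))

/-- Autocorrelation demerit factor `DF(f) = CDF(f,f) − 1`. -/
def DF (ℓ : ℕ) (f : ℕ → ℂ) : ℝ := CDF ℓ f f - 1

/-- `u` is a unimodularization of the length-`ℓ` sequence `f`: it agrees with `f` at
nonzero terms and replaces each zero term by a complex number of modulus `1`. -/
def IsUnimodularization (ℓ : ℕ) (f u : ℕ → ℂ) : Prop :=
  ∀ j < ℓ, (f j ≠ 0 → u j = f j) ∧ (f j = 0 → norm (u j) = 1)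

/-- The multiplicative characters of `F_p = ZMod p`, extended by `χ(0) = 0`. -/
abbrev MChar (p : ℕ) := MulChar (ZMod p) ℂ

instance (p : ℕ) [Fact p.Prime] : Fintype (MChar p) := Fintype.ofFinite _

/-- The Gauss sum `τ(χ) = Σ_{x ∈ F_p} e^{2πi x / p} χ(x)` (note `χ(0) = 0`). -/
def gauss (p : ℕ) [Fact p.Prime] (χ : MChar p) : ℂ :=
  ∑ x : ZMod p, Complex.exp (2 * Real.pi * Complex.I * (x.val : ℂ) / (p : ℂ)) * χ x

/-- The quadratic character `η` of `F_p`, with values in `ℂ`. -/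
def quadChar (p : ℕ) [Fact p.Prime] : MChar p :=
  (quadraticChar (ZMod p)).ringHomComp (Int.castRingHom ℂ)

/-- `c` is a character combination: the coefficient of the trivial character vanishes and
the sum of the squared magnitudes of the coefficients is `1`. -/
def IsCharCombo (p : ℕ) [Fact p.Prime] (c : MChar p → ℂ) : Prop :=
  c 1 = 0 ∧ ∑ χ : MChar p, norm (c χ) ^ 2 = 1

/-- The function `F(a) = Σ_χ f_χ · χ(a)` attached to a character combination. -/
def combFun (p : ℕ) [Fact p.Prime] (c : MChar p → ℂ) (a : ZMod p) : ℂ :=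
  ∑ χ : MChar p, c χ * χ a

/-- The character combination sequence with shift `s`: its `j`-th term is `F(s + j)`. -/
def combSeq (p : ℕ) [Fact p.Prime] (c : MChar p → ℂ) (s : ℤ) : ℕ → ℂ :=
  fun j => combFun p c (((s + (j : ℤ)) : ℤ) : ZMod p)

/-- A character combination is unimodularizable when `|F(a)| = 1` for all `a ≠ 0`. -/
def Unimodularizable (p : ℕ) [Fact p.Prime] (c : MChar p → ℂ) : Prop :=
  ∀ a : ZMod p, a ≠ 0 → norm (combFun p c a) = 1

/-- The parameter `S_{f,g}` of a pair of character combination sequences. -/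
def Sparam (p : ℕ) [Fact p.Prime] (c d : MChar p → ℂ) : ℂ :=
  (∑ φ : MChar p, ∑ χ : MChar p, ∑ ψ : MChar p, ∑ ω : MChar p,
      if φ * χ = ψ * ω ∧ φ ≠ χ⁻¹ ∧ φ ≠ ψ ∧ φ ≠ ω then
        c φ * d χ * (starRingEnd ℂ) (c ψ * d ω) *
          (gauss p φ * gauss p χ * (starRingEnd ℂ) (gauss p ψ * gauss p ω)) / (p : ℂ) ^ 2
      else 0)
    - ((∑ φ : MChar p, norm (c φ * d φ) ^ 2 : ℝ) : ℂ)
    - ((∑ φ : MChar p, norm (c φ * d φ⁻¹) ^ 2 : ℝ) : ℂ)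
    - ∑ φ : MChar p, c φ * (starRingEnd ℂ) (c φ⁻¹) * d φ⁻¹ * (starRingEnd ℂ) (d φ)
    + ((norm (c (quadChar p) * d (quadChar p)) ^ 2 : ℝ) : ℂ)

/-- The parameter `S_{f,f}` of a single character combination sequence. -/
def SparamAuto (p : ℕ) [Fact p.Prime] (c : MChar p → ℂ) : ℂ :=
  (∑ φ : MChar p, ∑ χ : MChar p, ∑ ψ : MChar p, ∑ ω : MChar p,
      if φ * χ = ψ * ω ∧ φ ≠ χ⁻¹ ∧ φ ≠ ψ ∧ φ ≠ ω then
        c φ * c χ * (starRingEnd ℂ) (c ψ * c ω) *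
          (gauss p φ * gauss p χ * (starRingEnd ℂ) (gauss p ψ * gauss p ω)) / (p : ℂ) ^ 2
      else 0)
    - 2 * ((∑ φ : MChar p, norm (c φ * c φ⁻¹) ^ 2 : ℝ) : ℂ)
    - ((∑ φ : MChar p, norm (c φ) ^ 4 : ℝ) : ℂ)
    + ((norm (c (quadChar p)) ^ 4 : ℝ) : ℂ)

/-- The parameter `U_{f,g}`. -/
def Uparam (p : ℕ) [Fact p.Prime] (c d : MChar p → ℂ) : ℝ :=
  norm (∑ φ : MChar p, c φ * (starRingEnd ℂ) (d φ)) ^ 2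

/-- The parameter `V_{f,g}`. -/
def Vparam (p : ℕ) [Fact p.Prime] (c d : MChar p → ℂ) : ℝ :=
  norm (∑ φ : MChar p, c φ * d φ⁻¹ * φ (-1)) ^ 2

/-- The parameter `W_f`. -/
def Wparam (p : ℕ) [Fact p.Prime] (c : MChar p → ℂ) : ℝ :=
  ∑ φ : MChar p, norm (c φ)

/-- Periodic crosscorrelation of two periodic sequences of period `n` at shift `s`. -/
def PC (n : ℕ) [NeZero n] (u v : ZMod n → ℂ) (s : ZMod n) : ℂ :=
  ∑ j : ZMod n, u j * (starRingEnd ℂ) (v (j + s))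

/-- Fourier transform `û_a = Σ_x u_x e^{2πi a x / n}` of a periodic sequence of period `n`. -/
def FT (n : ℕ) [NeZero n] (u : ZMod n → ℂ) (a : ZMod n) : ℂ :=
  ∑ x : ZMod n, u x * Complex.exp (2 * Real.pi * Complex.I * ((a.val : ℂ) * (x.val : ℂ)) / (n : ℂ))

/-- `α` is a primitive element of `F_p`, i.e. a generator of the unit group. -/
def IsPrimitive (p : ℕ) (α : (ZMod p)ˣ) : Prop :=
  ∀ x : (ZMod p)ˣ, x ∈ Subgroup.zpowers α

/-- The subgroup `F_p^{*2m}` of `2m`-th powers in the unit group of `F_p`. -/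
def powSubgroup (p m : ℕ) : Subgroup (ZMod p)ˣ :=
  (powMonoidHom (2 * m) : (ZMod p)ˣ →* (ZMod p)ˣ).range

/-- The quotient group `F_p^* / F_p^{*2m}` of `2m`-th power residue classes. -/
abbrev ResCosets (p m : ℕ) := (ZMod p)ˣ ⧸ powSubgroup p m

/-- The function `F_{p,𝒜}`: `0` at `0`, `+1` on the union of the cosets in `𝒜`,
`−1` on the remaining nonzero elements. -/
def resFun (p m : ℕ) (A : Finset (ResCosets p m)) (j : ZMod p) : ℂ :=
  if h : IsUnit j then (if (QuotientGroup.mk h.unit : ResCosets p m) ∈ A then 1 else -1) else 0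

/-- The sequence of a `2m`-th residue class construction, with shift `s`. -/
def resSeq (p m : ℕ) (A : Finset (ResCosets p m)) (s : ℤ) : ℕ → ℂ :=
  fun j => resFun p m A (((s + (j : ℤ)) : ℤ) : ZMod p)

/-- The character combination coefficients of a `2m`-th residue class sequence:
`f_χ = (1/m) Σ_{A ∈ 𝒜} χ̄(A)` for nontrivial `χ` in the subgroup `Θ_p` of order `2m`
(characterized by `χ^{2m} = 1`), and `f_χ = 0` otherwise; `χ̄(A)` is evaluated at a
representative of the coset `A`, on which `χ̄` is constant. -/
def resCoef (p m : ℕ) [Fact p.Prime] (A : Finset (ResCosets p m)) (χ : MChar p) : ℂ :=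
  if χ ≠ 1 ∧ χ ^ (2 * m) = 1 then
    (1 / (m : ℂ)) * ∑ B ∈ A, χ⁻¹ ((B.out : (ZMod p)ˣ) : ZMod p)
  else 0

/-- The image of the coset `B` under multiplication by `−1`. -/
def negCoset (p m : ℕ) (B : ResCosets p m) : ResCosets p m :=
  QuotientGroup.mk ((-1 : (ZMod p)ˣ) * B.out)

/-- The quadratic residue function `H̃_p`: `+1` on `F_p^{*2}`, `−1` on `α F_p^{*2}`,
and `0` at `0`. -/
def Htilde (p : ℕ) (α : (ZMod p)ˣ) (x : ZMod p) : ℂ :=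
  if ∃ y : (ZMod p)ˣ, x = ((y ^ 2 : (ZMod p)ˣ) : ZMod p) then 1
  else if ∃ y : (ZMod p)ˣ, x = ((α * y ^ 2 : (ZMod p)ˣ) : ZMod p) then -1
  else 0

/-- The quartic residue function `F̃_p`: `+1` on `F_p^{*4} ∪ αF_p^{*4}`,
`−1` on `α²F_p^{*4} ∪ α³F_p^{*4}`, and `0` at `0`. -/
def Ftilde (p : ℕ) (α : (ZMod p)ˣ) (x : ZMod p) : ℂ :=
  if (∃ y : (ZMod p)ˣ, x = ((y ^ 4 : (ZMod p)ˣ) : ZMod p)) ∨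
      (∃ y : (ZMod p)ˣ, x = ((α * y ^ 4 : (ZMod p)ˣ) : ZMod p)) then 1
  else if (∃ y : (ZMod p)ˣ, x = ((α ^ 2 * y ^ 4 : (ZMod p)ˣ) : ZMod p)) ∨
      (∃ y : (ZMod p)ˣ, x = ((α ^ 3 * y ^ 4 : (ZMod p)ˣ) : ZMod p)) then -1
  else 0

/-- The quartic residue function `G̃_p`: `+1` on `F_p^{*4} ∪ α³F_p^{*4}`,
`−1` on `αF_p^{*4} ∪ α²F_p^{*4}`, and `0` at `0`. -/
def Gtilde (p : ℕ) (α : (ZMod p)ˣ) (x : ZMod p) : ℂ :=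
  if (∃ y : (ZMod p)ˣ, x = ((y ^ 4 : (ZMod p)ˣ) : ZMod p)) ∨
      (∃ y : (ZMod p)ˣ, x = ((α ^ 3 * y ^ 4 : (ZMod p)ˣ) : ZMod p)) then 1
  else if (∃ y : (ZMod p)ˣ, x = ((α * y ^ 4 : (ZMod p)ˣ) : ZMod p)) ∨
      (∃ y : (ZMod p)ˣ, x = ((α ^ 2 * y ^ 4 : (ZMod p)ˣ) : ZMod p)) then -1
  else 0

/-- The quadratic residue sequence `h̃_p^{s,ℓ}` (as a function; the length is used
in the correlation functionals). -/
def hSeq (p : ℕ) (α : (ZMod p)ˣ) (s : ℤ) : ℕ → ℂ :=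
  fun j => Htilde p α (((s + (j : ℤ)) : ℤ) : ZMod p)

/-- The quartic residue sequence `f̃_p^{s,ℓ}`. -/
def fSeq (p : ℕ) (α : (ZMod p)ˣ) (s : ℤ) : ℕ → ℂ :=
  fun j => Ftilde p α (((s + (j : ℤ)) : ℤ) : ZMod p)

/-- The quartic residue sequence `g̃_p^{s,ℓ}`. -/
def gSeq (p : ℕ) (α : (ZMod p)ˣ) (s : ℤ) : ℕ → ℂ :=
  fun j => Gtilde p α (((s + (j : ℤ)) : ℤ) : ZMod p)

set_option linter.unusedSectionVars false

section Aux
variable {p : ℕ} [Fact p.Prime]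

def ep (p : ℕ) [NeZero p] : AddChar (ZMod p) ℂ := ZMod.stdAddChar

lemma ep_apply (x : ZMod p) :
    ep p x = Complex.exp (2 * Real.pi * Complex.I * (x.val : ℂ) / (p : ℂ)) := by
  rw [ep, ZMod.stdAddChar_apply, ZMod.toCircle_apply]

lemma conj_char (χ : MChar p) (a : ZMod p) : (starRingEnd ℂ) (χ a) = χ⁻¹ a := by
  simpa using MulChar.star_apply' χ a

lemma conj_ep (a : ZMod p) : (starRingEnd ℂ) (ep p a) = ep p (-a) := by
  have h : (0:ℕ) < ringChar (ZMod p) := by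
    rw [ZMod.ringChar_zmod_n]; exact (Fact.out : p.Prime).pos
  rw [AddChar.starComp_apply h, AddChar.inv_apply]

lemma ep_primitive : (ep p).IsPrimitive := ZMod.isPrimitive_stdAddChar p

lemma mchar_mul_apply (μ ν : MChar p) (t : ZMod p) : (μ * ν) t = μ t * ν t := by
  rw [MulChar.coeToFun_mul]; rfl

lemma mchar_inv_mul_apply (χ : MChar p) {t : ZMod p} (hu : IsUnit t) : χ⁻¹ t * χ t = 1 := by
  rw [← mchar_mul_apply, inv_mul_cancel, MulChar.one_apply hu]

lemma sum_char (χ : MChar p) : ∑ t : ZMod p, χ t = if χ = 1 then ((p : ℂ) - 1) else 0 := by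
  split_ifs with h
  · subst h
    have h1 : ∀ t : ZMod p, (1 : MChar p) t = 1 - (if t = 0 then 1 else 0) := by
      intro t
      by_cases ht : t = 0
      · simp [ht, MulChar.map_nonunit]
      · rw [MulChar.one_apply (isUnit_iff_ne_zero.mpr ht), if_neg ht]; ring
    rw [Finset.sum_congr rfl fun t _ => h1 t, Finset.sum_sub_distrib,
      Finset.sum_const, Finset.sum_ite_eq' Finset.univ (0 : ZMod p) (fun _ => (1:ℂ))]
    simp [ZMod.card]
  · exact MulChar.sum_eq_zero_of_ne_one h

lemma sum_ep (b : ZMod p) : ∑ t : ZMod p, ep p (t * b) = if b = 0 then (p : ℂ) else 0 := by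
  rw [AddChar.sum_mulShift b ep_primitive, ZMod.card p]
  split <;> simp

lemma twisted (χ : MChar p) (hχ : χ ≠ 1) (t : ZMod p) :
    ∑ x : ZMod p, χ x * ep p (t * x) = χ⁻¹ t * gaussSum χ (ep p) := by
  by_cases ht : t = 0
  · simp [ht, MulChar.map_nonunit, MulChar.sum_eq_zero_of_ne_one hχ]
  · have hu : IsUnit t := isUnit_iff_ne_zero.mpr ht
    have h1 := gaussSum_mulShift χ (ep p) hu.unit
    have h2 : gaussSum χ (AddChar.mulShift (ep p) hu.unit) = ∑ x : ZMod p, χ x * ep p (t * x) := by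
      simp [gaussSum, AddChar.mulShift_apply]
    rw [h2, IsUnit.unit_spec] at h1
    calc ∑ x : ZMod p, χ x * ep p (t * x)
        = (χ⁻¹ t * χ t) * ∑ x : ZMod p, χ x * ep p (t * x) := by
          rw [mchar_inv_mul_apply χ hu, one_mul]
      _ = χ⁻¹ t * gaussSum χ (ep p) := by rw [mul_assoc, h1]

lemma gauss_eq (χ : MChar p) : gauss p χ = gaussSum χ (ep p) := by
  rw [gauss, gaussSum]
  exact Finset.sum_congr rfl fun x _ => by rw [ep_apply, mul_comm]

lemma conj_gauss (χ : MChar p) :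
    (starRingEnd ℂ) (gauss p χ) = gaussSum χ⁻¹ (ep p)⁻¹ := by
  rw [gauss_eq, gaussSum, gaussSum, map_sum]
  refine Finset.sum_congr rfl fun x _ => ?_
  rw [map_mul, conj_char, conj_ep, AddChar.inv_apply]

lemma gauss_norm (χ : MChar p) (hχ : χ ≠ 1) :
    gauss p χ * (starRingEnd ℂ) (gauss p χ) = (p : ℂ) := by
  rw [conj_gauss, gauss_eq, gaussSum_mul_gaussSum_eq_card hχ ep_primitive, ZMod.card]

lemma gauss_mul_inv (χ : MChar p) (hχ : χ ≠ 1) :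
    gauss p χ * gauss p χ⁻¹ = χ (-1) * (p : ℂ) := by
  rw [gauss_eq, gauss_eq]
  have h1 := gaussSum_mul_gaussSum_eq_card hχ (ep_primitive (p := p))
  have h2 : gaussSum χ⁻¹ (ep p) = χ⁻¹ (-1) * gaussSum χ⁻¹ ((ep p)⁻¹) := by
    rw [AddChar.inv_mulShift]
    have h := gaussSum_mulShift χ⁻¹ (ep p) (-1 : (ZMod p)ˣ)
    rw [Units.coe_neg_one] at h
    exact h.symm
  have hm1 : χ (-1) * χ⁻¹ (-1) = 1 := by
    rw [mul_comm]; exact mchar_inv_mul_apply χ (isUnit_one.neg)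
  calc gaussSum χ (ep p) * gaussSum χ⁻¹ (ep p)
      = χ⁻¹ (-1) * (gaussSum χ (ep p) * gaussSum χ⁻¹ ((ep p)⁻¹)) := by rw [h2]; ring
    _ = χ⁻¹ (-1) * (p:ℂ) := by rw [h1, ZMod.card]
    _ = χ (-1) * (p:ℂ) := by
        have h5 : χ (-1) * χ (-1) = 1 := by rw [← map_mul]; norm_num
        have h4 : χ (-1) * χ (-1) * χ⁻¹ (-1) = χ (-1) := by
          rw [mul_assoc, hm1, mul_one]
        rw [h5, one_mul] at h4
        rw [h4]

lemma conj_gauss_pair (χ : MChar p) (hχ : χ ≠ 1) :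
    (starRingEnd ℂ) (gauss p χ * gauss p χ⁻¹) = χ (-1) * (p : ℂ) := by
  rw [gauss_mul_inv χ hχ, map_mul, conj_char, map_natCast]
  have h5 : χ (-1) * χ (-1) = 1 := by rw [← map_mul]; norm_num
  rcases mul_self_eq_one_iff.mp h5 with h | h <;>
    rcases mul_self_eq_one_iff.mp (by rw [← map_mul]; norm_num :
      χ⁻¹ (-1) * χ⁻¹ (-1) = 1) with h' | h'
  all_goals rw [h, h']
  · have := mchar_inv_mul_apply χ (isUnit_one.neg : IsUnit (-1 : ZMod p))
    rw [h, h'] at this; norm_num at this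
  · have := mchar_inv_mul_apply χ (isUnit_one.neg : IsUnit (-1 : ZMod p))
    rw [h, h'] at this; norm_num at this


def hatC (c : MChar p → ℂ) (t : ZMod p) : ℂ := ∑ x : ZMod p, combFun p c x * ep p (t * x)

lemma hatC_eq (c : MChar p → ℂ) (hc1 : c 1 = 0) (t : ZMod p) :
    hatC c t = ∑ φ : MChar p, c φ * φ⁻¹ t * gauss p φ := by
  rw [hatC]
  calc ∑ x : ZMod p, combFun p c x * ep p (t * x)
      = ∑ x : ZMod p, ∑ φ : MChar p, c φ * φ x * ep p (t * x) := by
        refine Finset.sum_congr rfl fun x _ => ?_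
        rw [combFun, Finset.sum_mul]
    _ = ∑ φ : MChar p, ∑ x : ZMod p, c φ * (φ x * ep p (t * x)) := by
        rw [Finset.sum_comm]
        exact Finset.sum_congr rfl fun φ _ => Finset.sum_congr rfl fun x _ => by ring
    _ = ∑ φ : MChar p, c φ * ∑ x : ZMod p, φ x * ep p (t * x) := by
        exact Finset.sum_congr rfl fun φ _ => (Finset.mul_sum _ _ _).symm
    _ = ∑ φ : MChar p, c φ * φ⁻¹ t * gauss p φ := by
        refine Finset.sum_congr rfl fun φ _ => ?_
        by_cases hφ : φ = 1
        · rw [hφ, hc1]; ring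
        · rw [twisted φ hφ t, gauss_eq]; ring

lemma conj_hatC (c : MChar p → ℂ) (hc1 : c 1 = 0) (t : ZMod p) :
    (starRingEnd ℂ) (hatC c t)
      = ∑ φ : MChar p, (starRingEnd ℂ) (c φ) * φ t * (starRingEnd ℂ) (gauss p φ) := by
  rw [hatC_eq c hc1 t, map_sum]
  refine Finset.sum_congr rfl fun φ _ => ?_
  rw [map_mul, map_mul, conj_char, inv_inv]

lemma sum_swap5 {α β γ δ : Type*} [Fintype α] [Fintype β] [Fintype γ] [Fintype δ]
    (f : ZMod p → α → β → γ → δ → ℂ) :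
    ∑ t : ZMod p, ∑ a : α, ∑ b : β, ∑ x : γ, ∑ y : δ, f t a b x y
      = ∑ a : α, ∑ b : β, ∑ x : γ, ∑ y : δ, ∑ t : ZMod p, f t a b x y := by
  rw [Finset.sum_comm]
  refine Finset.sum_congr rfl fun a _ => ?_
  rw [Finset.sum_comm]
  refine Finset.sum_congr rfl fun b _ => ?_
  rw [Finset.sum_comm]
  refine Finset.sum_congr rfl fun x _ => ?_
  rw [Finset.sum_comm]

lemma stepA1 (c d : MChar p → ℂ) :
    ∑ a : ZMod p, PC p (combFun p c) (combFun p d) a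
        * (starRingEnd ℂ) (PC p (combFun p c) (combFun p d) a)
      = ∑ x : ZMod p, ∑ v : ZMod p, ∑ y : ZMod p,
          (combFun p c x * (starRingEnd ℂ) (combFun p c y)) *
            (combFun p d v * (starRingEnd ℂ) (combFun p d (x - y + v))) := by
  set F := combFun p c with hF
  set G := combFun p d with hG
  calc ∑ a : ZMod p, PC p F G a * (starRingEnd ℂ) (PC p F G a)
      = ∑ a : ZMod p, ∑ j : ZMod p, ∑ k : ZMod p,
          (F j * (starRingEnd ℂ) (G (j + a))) * ((starRingEnd ℂ) (F k) * G (k + a)) := by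
        refine Finset.sum_congr rfl fun a _ => ?_
        rw [PC, map_sum, Finset.sum_mul_sum]
        refine Finset.sum_congr rfl fun j _ => Finset.sum_congr rfl fun k _ => ?_
        rw [map_mul, RingHomCompTriple.comp_apply, RingHom.id_apply]
    _ = ∑ j : ZMod p, ∑ k : ZMod p, ∑ a : ZMod p,
          (F j * (starRingEnd ℂ) (G (j + a))) * ((starRingEnd ℂ) (F k) * G (k + a)) := by
        rw [Finset.sum_comm]
        exact Finset.sum_congr rfl fun j _ => Finset.sum_comm
    _ = ∑ j : ZMod p, ∑ k : ZMod p, ∑ v : ZMod p,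
          (F j * (starRingEnd ℂ) (F k)) * (G v * (starRingEnd ℂ) (G (j - k + v))) := by
        refine Finset.sum_congr rfl fun j _ => Finset.sum_congr rfl fun k _ => ?_
        refine Fintype.sum_equiv (Equiv.addLeft k) _ _ fun a => ?_
        have harg : j - k + (Equiv.addLeft k a) = j + a := by
          simp [Equiv.addLeft]; ring
        simp only [Equiv.coe_addLeft, harg]
        ring
    _ = ∑ x : ZMod p, ∑ v : ZMod p, ∑ y : ZMod p,
          (F x * (starRingEnd ℂ) (F y)) * (G v * (starRingEnd ℂ) (G (x - y + v))) := by
        exact Finset.sum_congr rfl fun x _ => Finset.sum_comm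

lemma stepA2 (c d : MChar p → ℂ) :
    ∑ t : ZMod p, (hatC c t * (starRingEnd ℂ) (hatC c t))
        * (hatC d t * (starRingEnd ℂ) (hatC d t))
      = (p : ℂ) * ∑ x : ZMod p, ∑ v : ZMod p, ∑ y : ZMod p,
          (combFun p c x * (starRingEnd ℂ) (combFun p c y)) *
            (combFun p d v * (starRingEnd ℂ) (combFun p d (x - y + v))) := by
  set F := combFun p c with hF
  set G := combFun p d with hG
  have hconj : ∀ (u : MChar p → ℂ) (t : ZMod p), (starRingEnd ℂ) (hatC u t)
      = ∑ y : ZMod p, (starRingEnd ℂ) (combFun p u y) * ep p (-(t * y)) := by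
    intro u t
    rw [hatC, map_sum]
    exact Finset.sum_congr rfl fun y _ => by rw [map_mul, conj_ep]
  calc ∑ t : ZMod p, (hatC c t * (starRingEnd ℂ) (hatC c t))
        * (hatC d t * (starRingEnd ℂ) (hatC d t))
      = ∑ t : ZMod p, ∑ x : ZMod p, ∑ v : ZMod p, ∑ y : ZMod p, ∑ u : ZMod p,
          ((F x * (starRingEnd ℂ) (F y)) * (G v * (starRingEnd ℂ) (G u)))
            * ep p (t * (x - y + v - u)) := by
        refine Finset.sum_congr rfl fun t _ => ?_
        rw [hconj c t, hconj d t, hatC, hatC, Finset.sum_mul_sum, Finset.sum_mul_sum,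
          Finset.sum_mul_sum]
        refine Finset.sum_congr rfl fun x _ => Finset.sum_congr rfl fun v _ => ?_
        rw [Finset.sum_mul_sum]
        refine Finset.sum_congr rfl fun y _ => Finset.sum_congr rfl fun u _ => ?_
        rw [show t * (x - y + v - u) = t * x + (-(t * y) + (t * v + -(t * u))) by ring,
          AddChar.map_add_eq_mul, AddChar.map_add_eq_mul, AddChar.map_add_eq_mul]
        ring
    _ = ∑ x : ZMod p, ∑ v : ZMod p, ∑ y : ZMod p, ∑ u : ZMod p,
          ((F x * (starRingEnd ℂ) (F y)) * (G v * (starRingEnd ℂ) (G u)))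
            * ∑ t : ZMod p, ep p (t * (x - y + v - u)) := by
        rw [sum_swap5]
        exact Finset.sum_congr rfl fun x _ => Finset.sum_congr rfl fun v _ =>
          Finset.sum_congr rfl fun y _ => Finset.sum_congr rfl fun u _ =>
            (Finset.mul_sum _ _ _).symm
    _ = ∑ x : ZMod p, ∑ v : ZMod p, ∑ y : ZMod p, ∑ u : ZMod p,
          (if u = x - y + v then
            ((F x * (starRingEnd ℂ) (F y)) * (G v * (starRingEnd ℂ) (G u))) * (p:ℂ) else 0) := by
        refine Finset.sum_congr rfl fun x _ => Finset.sum_congr rfl fun v _ =>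
          Finset.sum_congr rfl fun y _ => Finset.sum_congr rfl fun u _ => ?_
        rw [sum_ep]
        by_cases h : u = x - y + v
        · rw [if_pos h, if_pos (by rw [h]; ring)]
        · rw [if_neg (fun hz => h (by linear_combination -hz)), if_neg h, mul_zero]
    _ = ∑ x : ZMod p, ∑ v : ZMod p, ∑ y : ZMod p,
          ((F x * (starRingEnd ℂ) (F y)) * (G v * (starRingEnd ℂ) (G (x - y + v)))) * (p:ℂ) := by
        refine Finset.sum_congr rfl fun x _ => Finset.sum_congr rfl fun v _ =>
          Finset.sum_congr rfl fun y _ => ?_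
        exact Finset.sum_ite_eq' Finset.univ (x - y + v) _ |>.trans (by simp)
    _ = (p : ℂ) * ∑ x : ZMod p, ∑ v : ZMod p, ∑ y : ZMod p,
          (F x * (starRingEnd ℂ) (F y)) * (G v * (starRingEnd ℂ) (G (x - y + v))) := by
        rw [Finset.mul_sum]
        refine Finset.sum_congr rfl fun x _ => ?_
        rw [Finset.mul_sum]
        refine Finset.sum_congr rfl fun v _ => ?_
        rw [Finset.mul_sum]
        exact Finset.sum_congr rfl fun y _ => by ring


lemma stepB (c d : MChar p → ℂ) (hc1 : c 1 = 0) (hd1 : d 1 = 0) :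
    ∑ t : ZMod p, (hatC c t * (starRingEnd ℂ) (hatC c t))
        * (hatC d t * (starRingEnd ℂ) (hatC d t))
      = ((p : ℂ) - 1) * ∑ φ : MChar p, ∑ χ : MChar p, ∑ ψ : MChar p, ∑ ω : MChar p,
          (if φ * χ = ψ * ω then
            c φ * d χ * (starRingEnd ℂ) (c ψ * d ω) *
              (gauss p φ * gauss p χ * (starRingEnd ℂ) (gauss p ψ * gauss p ω))
          else 0) := by
  calc ∑ t : ZMod p, (hatC c t * (starRingEnd ℂ) (hatC c t))
        * (hatC d t * (starRingEnd ℂ) (hatC d t))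
      = ∑ t : ZMod p, ∑ φ : MChar p, ∑ χ : MChar p, ∑ ψ : MChar p, ∑ ω : MChar p,
          (c φ * d χ * (starRingEnd ℂ) (c ψ * d ω) *
            (gauss p φ * gauss p χ * (starRingEnd ℂ) (gauss p ψ * gauss p ω)))
            * ((φ⁻¹ * ψ * (χ⁻¹ * ω)) t) := by
        refine Finset.sum_congr rfl fun t _ => ?_
        rw [conj_hatC c hc1 t, conj_hatC d hd1 t, hatC_eq c hc1 t, hatC_eq d hd1 t,
          Finset.sum_mul_sum, Finset.sum_mul_sum, Finset.sum_mul_sum]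
        refine Finset.sum_congr rfl fun φ _ => Finset.sum_congr rfl fun χ _ => ?_
        rw [Finset.sum_mul_sum]
        refine Finset.sum_congr rfl fun ψ _ => Finset.sum_congr rfl fun ω _ => ?_
        rw [mchar_mul_apply, mchar_mul_apply, mchar_mul_apply, map_mul, map_mul]
        ring
    _ = ∑ φ : MChar p, ∑ χ : MChar p, ∑ ψ : MChar p, ∑ ω : MChar p,
          (c φ * d χ * (starRingEnd ℂ) (c ψ * d ω) *
            (gauss p φ * gauss p χ * (starRingEnd ℂ) (gauss p ψ * gauss p ω)))
            * ∑ t : ZMod p, ((φ⁻¹ * ψ * (χ⁻¹ * ω)) t) := by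
        rw [sum_swap5]
        exact Finset.sum_congr rfl fun φ _ => Finset.sum_congr rfl fun χ _ =>
          Finset.sum_congr rfl fun ψ _ => Finset.sum_congr rfl fun ω _ =>
            (Finset.mul_sum _ _ _).symm
    _ = ∑ φ : MChar p, ∑ χ : MChar p, ∑ ψ : MChar p, ∑ ω : MChar p,
          ((p : ℂ) - 1) * (if φ * χ = ψ * ω then
            c φ * d χ * (starRingEnd ℂ) (c ψ * d ω) *
              (gauss p φ * gauss p χ * (starRingEnd ℂ) (gauss p ψ * gauss p ω))
          else 0) := by
        refine Finset.sum_congr rfl fun φ _ => Finset.sum_congr rfl fun χ _ =>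
          Finset.sum_congr rfl fun ψ _ => Finset.sum_congr rfl fun ω _ => ?_
        rw [sum_char]
        have hcond : (φ⁻¹ * ψ * (χ⁻¹ * ω) = 1) ↔ (φ * χ = ψ * ω) := by
          rw [show φ⁻¹ * ψ * (χ⁻¹ * ω) = (ψ * ω) * (φ * χ)⁻¹ by rw [mul_inv_rev]; ac_rfl,
            mul_inv_eq_one, eq_comm]
        by_cases h : φ * χ = ψ * ω
        · rw [if_pos (hcond.mpr h), if_pos h]; ring
        · rw [if_neg (fun hz => h (hcond.mp hz)), if_neg h]; ring
    _ = ((p : ℂ) - 1) * ∑ φ : MChar p, ∑ χ : MChar p, ∑ ψ : MChar p, ∑ ω : MChar p,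
          (if φ * χ = ψ * ω then
            c φ * d χ * (starRingEnd ℂ) (c ψ * d ω) *
              (gauss p φ * gauss p χ * (starRingEnd ℂ) (gauss p ψ * gauss p ω))
          else 0) := by
        rw [Finset.mul_sum]
        refine Finset.sum_congr rfl fun φ _ => ?_
        rw [Finset.mul_sum]
        refine Finset.sum_congr rfl fun χ _ => ?_
        rw [Finset.mul_sum]
        refine Finset.sum_congr rfl fun ψ _ => ?_
        rw [Finset.mul_sum]


lemma mul_conj' (z : ℂ) : z * (starRingEnd ℂ) z = ((norm z ^ 2 : ℝ) : ℂ) := by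
  rw [Complex.sq_norm, Complex.mul_conj]

lemma sum_mul_conj (c : MChar p → ℂ) :
    ∑ φ : MChar p, c φ * (starRingEnd ℂ) (c φ)
      = ((∑ φ : MChar p, norm (c φ) ^ 2 : ℝ) : ℂ) := by
  push_cast
  exact Finset.sum_congr rfl fun φ _ => by rw [mul_conj']; push_cast; ring

lemma quad_sq : quadChar p * quadChar p = 1 := by
  have h := (quadraticChar_isQuadratic (ZMod p)).comp (Int.castRingHom ℂ)
  have := h.sq_eq_one
  rwa [sq] at this

lemma quad_inv : (quadChar p)⁻¹ = quadChar p :=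
  inv_eq_of_mul_eq_one_left quad_sq

lemma sq_eq_one_iff' (φ : MChar p) : φ * φ = 1 ↔ φ = 1 ∨ φ = quadChar p := by
  constructor
  · intro h
    obtain ⟨g, hg⟩ := IsCyclic.exists_generator (α := (ZMod p)ˣ)
    have hval : φ g * φ g = 1 := by
      rw [← mchar_mul_apply, h, MulChar.one_apply g.isUnit]
    rcases mul_self_eq_one_iff.mp hval with h1 | h1
    · left
      rw [MulChar.eq_iff hg, h1, MulChar.one_apply g.isUnit]
    · right
      rw [MulChar.eq_iff hg, h1]
      by_cases hp2 : p = 2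
      · -- p = 2 : g = 1, so φ g = 1 ≠ -1, contradiction
        exfalso
        have hg1 : (g : (ZMod p)ˣ) = 1 := by
          subst hp2; exact Subsingleton.elim _ _
        rw [hg1] at h1
        simp at h1
        norm_num at h1
      · -- p odd : the generator is not a square
        have hodd : Odd p := (Fact.out : p.Prime).odd_of_ne_two hp2
        have hns : ¬ IsSquare ((g : (ZMod p)ˣ) : ZMod p) := by
          intro ⟨x, hx⟩
          have hxu : IsUnit x := by
            have : IsUnit ((g : (ZMod p)ˣ) : ZMod p) := g.isUnit
            rw [hx] at this
            exact isUnit_of_mul_isUnit_left this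
          have hgx : (g : (ZMod p)ˣ) = hxu.unit * hxu.unit := by
            ext; rw [hx]; simp
          have horder : orderOf (g : (ZMod p)ˣ) = p - 1 := by
            rw [orderOf_eq_card_of_forall_mem_zpowers hg, Nat.card_eq_fintype_card, ZMod.card_units_eq_totient,
              Nat.totient_prime (Fact.out : p.Prime)]
          have hdvd : (2 : ℕ) ∣ p - 1 := by
            obtain ⟨k, hk⟩ := hodd
            omega
          have hcard : Fintype.card (ZMod p)ˣ = p - 1 := by
            rw [ZMod.card_units_eq_totient, Nat.totient_prime (Fact.out : p.Prime)]
          have hpow : (g : (ZMod p)ˣ) ^ ((p - 1) / 2) = 1 := by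
            rw [hgx, ← sq, ← pow_mul, Nat.mul_div_cancel' hdvd, ← hcard]
            exact pow_card_eq_one
          have hle := orderOf_le_of_pow_eq_one (by
            have : 0 < (p - 1) / 2 := by
              have := (Fact.out : p.Prime).two_le
              omega
            exact this) hpow
          rw [horder] at hle
          have := (Fact.out : p.Prime).two_le
          omega
        have : quadraticChar (ZMod p) ((g : (ZMod p)ˣ) : ZMod p) = -1 :=
          (quadraticChar_neg_one_iff_not_isSquare).mpr hns
        rw [quadChar, MulChar.ringHomComp_apply, this]
        norm_num
  · rintro (h | h)
    · rw [h, one_mul]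
    · rw [h]; exact quad_sq


section Pieces
variable {c d : MChar p → ℂ}

lemma hp0 : (p : ℂ) ≠ 0 := by
  exact_mod_cast Nat.cast_ne_zero.mpr (Fact.out : p.Prime).pos.ne'

lemma chi_neg_one_sq (χ : MChar p) : χ (-1) * χ (-1) = 1 := by
  rw [← map_mul]; norm_num

lemma chi_neg_one_conj (χ : MChar p) : (starRingEnd ℂ) (χ (-1)) = χ (-1) := by
  rcases mul_self_eq_one_iff.mp (chi_neg_one_sq χ) with h | h <;> rw [h] <;> norm_num

lemma gauss_replace {A : MChar p → ℂ} (hA : A 1 = 0) (φ : MChar p) :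
    A φ * (gauss p φ * (starRingEnd ℂ) (gauss p φ)) = A φ * (p : ℂ) := by
  by_cases h : φ = 1
  · rw [h, hA, zero_mul, zero_mul]
  · rw [gauss_norm φ h]

lemma gauss_pair_replace {A : MChar p → ℂ} (hA : A 1 = 0) (φ : MChar p) :
    A φ * (gauss p φ * gauss p φ⁻¹) = A φ * (φ (-1) * (p : ℂ)) := by
  by_cases h : φ = 1
  · rw [h, hA, zero_mul, zero_mul]
  · rw [gauss_mul_inv φ h]

lemma gauss_pair_conj_replace {A : MChar p → ℂ} (hA : A 1 = 0) (φ : MChar p) :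
    A φ * (starRingEnd ℂ) (gauss p φ * gauss p φ⁻¹) = A φ * (φ (-1) * (p : ℂ)) := by
  by_cases h : φ = 1
  · rw [h, hA, zero_mul, zero_mul]
  · rw [conj_gauss_pair φ h]

lemma gauss_pair_norm {A : MChar p → ℂ} (hA : A 1 = 0) (φ : MChar p) :
    A φ * ((gauss p φ * gauss p φ⁻¹) * (starRingEnd ℂ) (gauss p φ * gauss p φ⁻¹))
      = A φ * (p : ℂ) ^ 2 := by
  by_cases h : φ = 1
  · rw [h, hA, zero_mul, zero_mul]
  · rw [conj_gauss_pair φ h, gauss_mul_inv φ h]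
    have h2 := chi_neg_one_sq φ
    calc A φ * (φ (-1) * (p:ℂ) * (φ (-1) * (p:ℂ)))
        = A φ * ((φ (-1) * φ (-1)) * (p:ℂ)^2) := by ring
      _ = A φ * (p:ℂ)^2 := by rw [h2, one_mul]

lemma gauss_norm2 {A : MChar p → ℂ} (hA : A 1 = 0) (φ : MChar p) :
    A φ * ((gauss p φ * gauss p φ) * (starRingEnd ℂ) (gauss p φ * gauss p φ))
      = A φ * (p : ℂ) ^ 2 := by
  by_cases h : φ = 1
  · rw [h, hA, zero_mul, zero_mul]
  · have hn := gauss_norm φ h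
    calc A φ * ((gauss p φ * gauss p φ) * (starRingEnd ℂ) (gauss p φ * gauss p φ))
        = A φ * ((gauss p φ * (starRingEnd ℂ) (gauss p φ))
            * (gauss p φ * (starRingEnd ℂ) (gauss p φ))) := by rw [map_mul]; ring
      _ = A φ * (p:ℂ)^2 := by rw [hn]; ring

/-- collapse `ψ := s φ χ`, `ω := w φ χ` -/
lemma collapse2 (f : MChar p → MChar p → MChar p → MChar p → ℂ)
    (s w : MChar p → MChar p → MChar p) :
    ∑ φ : MChar p, ∑ χ : MChar p, ∑ ψ : MChar p, ∑ ω : MChar p,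
        (if ψ = s φ χ ∧ ω = w φ χ then f φ χ ψ ω else 0)
      = ∑ φ : MChar p, ∑ χ : MChar p, f φ χ (s φ χ) (w φ χ) := by
  refine Finset.sum_congr rfl fun φ _ => Finset.sum_congr rfl fun χ _ => ?_
  have h1 : ∀ ψ : MChar p, (∑ ω : MChar p, if ψ = s φ χ ∧ ω = w φ χ then f φ χ ψ ω else 0)
      = if ψ = s φ χ then f φ χ ψ (w φ χ) else 0 := by
    intro ψ
    by_cases hψ : ψ = s φ χ
    · simp only [hψ, true_and]
      exact (Finset.sum_ite_eq' Finset.univ (w φ χ) _).trans (by simp)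
    · simp [hψ]
  rw [Finset.sum_congr rfl fun ψ _ => h1 ψ]
  exact (Finset.sum_ite_eq' Finset.univ (s φ χ) _).trans (by simp)

/-- collapse `χ := r φ`, `ω := w ψ` -/
lemma collapseA (f : MChar p → MChar p → MChar p → MChar p → ℂ)
    (r w : MChar p → MChar p) :
    ∑ φ : MChar p, ∑ χ : MChar p, ∑ ψ : MChar p, ∑ ω : MChar p,
        (if χ = r φ ∧ ω = w ψ then f φ χ ψ ω else 0)
      = ∑ φ : MChar p, ∑ ψ : MChar p, f φ (r φ) ψ (w ψ) := by
  refine Finset.sum_congr rfl fun φ _ => ?_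
  have h1 : ∀ χ ψ : MChar p, (∑ ω : MChar p, if χ = r φ ∧ ω = w ψ then f φ χ ψ ω else 0)
      = if χ = r φ then f φ χ ψ (w ψ) else 0 := by
    intro χ ψ
    by_cases hχ : χ = r φ
    · simp only [hχ, true_and]
      exact (Finset.sum_ite_eq' Finset.univ (w ψ) _).trans (by simp)
    · simp [hχ]
  have h2 : ∀ χ : MChar p, (∑ ψ : MChar p, ∑ ω : MChar p,
      if χ = r φ ∧ ω = w ψ then f φ χ ψ ω else 0)
      = if χ = r φ then (∑ ψ : MChar p, f φ χ ψ (w ψ)) else 0 := by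
    intro χ
    rw [Finset.sum_congr rfl fun ψ _ => h1 χ ψ]
    by_cases hχ : χ = r φ <;> simp [hχ]
  rw [Finset.sum_congr rfl fun χ _ => h2 χ]
  exact (Finset.sum_ite_eq' Finset.univ (r φ) _).trans (by simp)

/-- collapse `χ := r φ`, `ψ := s φ`, `ω := w φ`, with a guard `Q φ` -/
lemma collapse1 (f : MChar p → MChar p → MChar p → MChar p → ℂ) (Q : MChar p → Prop)
    (r s w : MChar p → MChar p) :
    ∑ φ : MChar p, ∑ χ : MChar p, ∑ ψ : MChar p, ∑ ω : MChar p,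
        (if Q φ ∧ χ = r φ ∧ ψ = s φ ∧ ω = w φ then f φ χ ψ ω else 0)
      = ∑ φ : MChar p, (if Q φ then f φ (r φ) (s φ) (w φ) else 0) := by
  refine Finset.sum_congr rfl fun φ _ => ?_
  have h1 : ∀ χ ψ : MChar p, (∑ ω : MChar p,
      if Q φ ∧ χ = r φ ∧ ψ = s φ ∧ ω = w φ then f φ χ ψ ω else 0)
      = if Q φ ∧ χ = r φ ∧ ψ = s φ then f φ χ ψ (w φ) else 0 := by
    intro χ ψ
    by_cases h : Q φ ∧ χ = r φ ∧ ψ = s φ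
    · simp only [h.1, h.2.1, h.2.2, true_and]
      simp only [eq_self_iff_true, true_and, if_true]
      exact (Finset.sum_ite_eq' Finset.univ (w φ) _).trans (by simp)
    · rw [if_neg h]
      refine Finset.sum_eq_zero fun ω _ => if_neg (fun hz => h ⟨hz.1, hz.2.1, hz.2.2.1⟩)
  have h2 : ∀ χ : MChar p, (∑ ψ : MChar p, ∑ ω : MChar p,
      if Q φ ∧ χ = r φ ∧ ψ = s φ ∧ ω = w φ then f φ χ ψ ω else 0)
      = if Q φ ∧ χ = r φ then f φ χ (s φ) (w φ) else 0 := by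
    intro χ
    rw [Finset.sum_congr rfl fun ψ _ => h1 χ ψ]
    by_cases h : Q φ ∧ χ = r φ
    · simp only [h.1, h.2, true_and]
      exact (Finset.sum_ite_eq' Finset.univ (s φ) _).trans (by simp)
    · refine (Finset.sum_eq_zero fun ψ _ => if_neg (fun hz => h ⟨hz.1, hz.2.1⟩)).trans ?_
      rw [if_neg h]
  rw [Finset.sum_congr rfl fun χ _ => h2 χ]
  by_cases h : Q φ
  · simp only [h, true_and]
    exact (Finset.sum_ite_eq' Finset.univ (r φ) _).trans (by simp)
  · refine (Finset.sum_eq_zero fun χ _ => if_neg (fun hz => h hz.1)).trans ?_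
    rw [if_neg h]


lemma collapse1sq (f : MChar p → MChar p → MChar p → MChar p → ℂ) :
    ∑ φ : MChar p, ∑ χ : MChar p, ∑ ψ : MChar p, ∑ ω : MChar p,
        (if φ * φ = 1 ∧ χ = φ ∧ ψ = φ ∧ ω = φ then f φ χ ψ ω else 0)
      = ∑ φ : MChar p, (if φ * φ = 1 then f φ φ φ φ else 0) := by
  refine Finset.sum_congr rfl fun φ _ => ?_
  have h1 : ∀ χ ψ : MChar p, (∑ ω : MChar p,
      if φ * φ = 1 ∧ χ = φ ∧ ψ = φ ∧ ω = φ then f φ χ ψ ω else 0)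
      = if φ * φ = 1 ∧ χ = φ ∧ ψ = φ then f φ χ ψ φ else 0 := by
    intro χ ψ
    by_cases h : φ * φ = 1 ∧ χ = φ ∧ ψ = φ
    · simp only [h.1, h.2.1, h.2.2, true_and]
      simp only [eq_self_iff_true, true_and, if_true]
      exact (Finset.sum_ite_eq' Finset.univ φ _).trans (by simp)
    · rw [if_neg h]
      refine Finset.sum_eq_zero fun ω _ => if_neg (fun hz => h ⟨hz.1, hz.2.1, hz.2.2.1⟩)
  have h2 : ∀ χ : MChar p, (∑ ψ : MChar p, ∑ ω : MChar p,
      if φ * φ = 1 ∧ χ = φ ∧ ψ = φ ∧ ω = φ then f φ χ ψ ω else 0)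
      = if φ * φ = 1 ∧ χ = φ then f φ χ φ φ else 0 := by
    intro χ
    rw [Finset.sum_congr rfl fun ψ _ => h1 χ ψ]
    by_cases h : φ * φ = 1 ∧ χ = φ
    · simp only [h.1, h.2, true_and]
      exact (Finset.sum_ite_eq' Finset.univ φ _).trans (by simp)
    · refine (Finset.sum_eq_zero fun ψ _ => if_neg (fun hz => h ⟨hz.1, hz.2.1⟩)).trans ?_
      rw [if_neg h]
  rw [Finset.sum_congr rfl fun χ _ => h2 χ]
  by_cases h : φ * φ = 1
  · simp only [h, true_and]
    exact (Finset.sum_ite_eq' Finset.univ φ _).trans (by simp)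
  · refine (Finset.sum_eq_zero fun χ _ => if_neg (fun hz => h hz.1)).trans ?_
    rw [if_neg h]

def t4 (c d : MChar p → ℂ) (φ χ ψ ω : MChar p) : ℂ :=
  c φ * d χ * (starRingEnd ℂ) (c ψ * d ω) *
    (gauss p φ * gauss p χ * (starRingEnd ℂ) (gauss p ψ * gauss p ω)) / (p : ℂ) ^ 2

lemma pieceA (hc : c 1 = 0) (hd : d 1 = 0) :
    ∑ φ : MChar p, ∑ χ : MChar p, ∑ ψ : MChar p, ∑ ω : MChar p,
        (if (φ * χ = ψ * ω) ∧ φ = χ⁻¹ then t4 c d φ χ ψ ω else 0)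
      = ((∑ φ : MChar p, c φ * d φ⁻¹ * φ (-1)) *
          (starRingEnd ℂ) (∑ φ : MChar p, c φ * d φ⁻¹ * φ (-1))) := by
  have hiff : ∀ φ χ ψ ω : MChar p,
      ((φ * χ = ψ * ω) ∧ φ = χ⁻¹) ↔ (χ = φ⁻¹ ∧ ω = ψ⁻¹) := by
    intro φ χ ψ ω
    constructor
    · rintro ⟨hP, hA⟩
      have hχ : χ = φ⁻¹ := by rw [hA, inv_inv]
      refine ⟨hχ, ?_⟩
      have h1 : φ * χ = 1 := by rw [hχ, mul_inv_cancel]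
      rw [h1] at hP
      exact eq_inv_of_mul_eq_one_right hP.symm
    · rintro ⟨hχ, hω⟩
      refine ⟨?_, by rw [hχ, inv_inv]⟩
      rw [hχ, hω, mul_inv_cancel, mul_inv_cancel]
  simp only [hiff]
  rw [collapseA (t4 c d) (fun φ => φ⁻¹) (fun ψ => ψ⁻¹)]
  have heval : ∀ φ ψ : MChar p, t4 c d φ φ⁻¹ ψ ψ⁻¹
      = (c φ * d φ⁻¹ * φ (-1)) * (starRingEnd ℂ) (c ψ * d ψ⁻¹ * ψ (-1)) := by
    intro φ ψ
    rw [t4]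
    have h1 : c φ * d φ⁻¹ * (starRingEnd ℂ) (c ψ * d ψ⁻¹) *
          (gauss p φ * gauss p φ⁻¹ * (starRingEnd ℂ) (gauss p ψ * gauss p ψ⁻¹))
        = ((c φ * d φ⁻¹) * (gauss p φ * gauss p φ⁻¹)) *
          ((starRingEnd ℂ) (c ψ * d ψ⁻¹) * (starRingEnd ℂ) (gauss p ψ * gauss p ψ⁻¹)) := by
      ring
    rw [h1, gauss_pair_replace (A := fun φ => c φ * d φ⁻¹) (by simp [hc]) φ,
      gauss_pair_conj_replace (A := fun ψ => (starRingEnd ℂ) (c ψ * d ψ⁻¹)) (by simp [hc, hd]) ψ]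
    rw [map_mul, map_mul, chi_neg_one_conj]
    have hp2 : ((p:ℂ))^2 ≠ 0 := pow_ne_zero 2 hp0
    rw [div_eq_iff hp2]
    simp only [map_mul]
    ring
  rw [Finset.sum_congr rfl fun φ _ => Finset.sum_congr rfl fun ψ _ => heval φ ψ]
  rw [map_sum, ← Finset.sum_mul_sum]

lemma pieceB (hc : IsCharCombo p c) (hd : IsCharCombo p d) :
    ∑ φ : MChar p, ∑ χ : MChar p, ∑ ψ : MChar p, ∑ ω : MChar p,
        (if (φ * χ = ψ * ω) ∧ φ = ψ then t4 c d φ χ ψ ω else 0) = 1 := by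
  have hiff : ∀ φ χ ψ ω : MChar p,
      ((φ * χ = ψ * ω) ∧ φ = ψ) ↔ (ψ = φ ∧ ω = χ) := by
    intro φ χ ψ ω
    constructor
    · rintro ⟨hP, hB⟩
      subst hB
      exact ⟨rfl, (mul_left_cancel hP).symm⟩
    · rintro ⟨hψ, hω⟩
      subst hψ; subst hω; exact ⟨rfl, rfl⟩
  simp only [hiff]
  rw [collapse2 (t4 c d) (fun φ _ => φ) (fun _ χ => χ)]
  have heval : ∀ φ χ : MChar p, t4 c d φ χ φ χ
      = (c φ * (starRingEnd ℂ) (c φ)) * (d χ * (starRingEnd ℂ) (d χ)) := by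
    intro φ χ
    rw [t4, map_mul, map_mul]
    have h1 : c φ * d χ * ((starRingEnd ℂ) (c φ) * (starRingEnd ℂ) (d χ)) *
          (gauss p φ * gauss p χ * ((starRingEnd ℂ) (gauss p φ) * (starRingEnd ℂ) (gauss p χ)))
        = ((c φ * (starRingEnd ℂ) (c φ)) * (gauss p φ * (starRingEnd ℂ) (gauss p φ))) *
          ((d χ * (starRingEnd ℂ) (d χ)) * (gauss p χ * (starRingEnd ℂ) (gauss p χ))) := by
      ring
    rw [h1, gauss_replace (A := fun φ => c φ * (starRingEnd ℂ) (c φ)) (by simp [show c 1 = 0 from hc.1]) φ,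
      gauss_replace (A := fun χ => d χ * (starRingEnd ℂ) (d χ)) (by simp [show d 1 = 0 from hd.1]) χ]
    have hp2 : ((p:ℂ))^2 ≠ 0 := pow_ne_zero 2 hp0
    rw [div_eq_iff hp2]
    ring
  rw [Finset.sum_congr rfl fun φ _ => Finset.sum_congr rfl fun χ _ => heval φ χ]
  rw [← Finset.sum_mul_sum, sum_mul_conj, sum_mul_conj, hc.2, hd.2]
  norm_num

lemma pieceC (hc : c 1 = 0) (hd : d 1 = 0) :
    ∑ φ : MChar p, ∑ χ : MChar p, ∑ ψ : MChar p, ∑ ω : MChar p,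
        (if (φ * χ = ψ * ω) ∧ φ = ω then t4 c d φ χ ψ ω else 0)
      = (∑ φ : MChar p, c φ * (starRingEnd ℂ) (d φ)) *
          (starRingEnd ℂ) (∑ φ : MChar p, c φ * (starRingEnd ℂ) (d φ)) := by
  have hiff : ∀ φ χ ψ ω : MChar p,
      ((φ * χ = ψ * ω) ∧ φ = ω) ↔ (ψ = χ ∧ ω = φ) := by
    intro φ χ ψ ω
    constructor
    · rintro ⟨hP, hC⟩
      subst hC
      rw [mul_comm ψ φ] at hP
      exact ⟨(mul_left_cancel hP).symm, rfl⟩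
    · rintro ⟨hψ, hω⟩
      subst hψ; subst hω; exact ⟨mul_comm _ _, rfl⟩
  simp only [hiff]
  rw [collapse2 (t4 c d) (fun _ χ => χ) (fun φ _ => φ)]
  have heval : ∀ φ χ : MChar p, t4 c d φ χ χ φ
      = (c φ * (starRingEnd ℂ) (d φ)) * (d χ * (starRingEnd ℂ) (c χ)) := by
    intro φ χ
    rw [t4, map_mul, map_mul]
    have h1 : c φ * d χ * ((starRingEnd ℂ) (c χ) * (starRingEnd ℂ) (d φ)) *
          (gauss p φ * gauss p χ * ((starRingEnd ℂ) (gauss p χ) * (starRingEnd ℂ) (gauss p φ)))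
        = ((c φ * (starRingEnd ℂ) (d φ)) * (gauss p φ * (starRingEnd ℂ) (gauss p φ))) *
          ((d χ * (starRingEnd ℂ) (c χ)) * (gauss p χ * (starRingEnd ℂ) (gauss p χ))) := by
      ring
    rw [h1, gauss_replace (A := fun φ => c φ * (starRingEnd ℂ) (d φ)) (by simp [hc]) φ,
      gauss_replace (A := fun χ => d χ * (starRingEnd ℂ) (c χ)) (by simp [hd]) χ]
    have hp2 : ((p:ℂ))^2 ≠ 0 := pow_ne_zero 2 hp0
    rw [div_eq_iff hp2]
    ring
  rw [Finset.sum_congr rfl fun φ _ => Finset.sum_congr rfl fun χ _ => heval φ χ]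
  rw [← Finset.sum_mul_sum, map_sum]
  congr 1
  refine Finset.sum_congr rfl fun χ _ => ?_
  rw [map_mul, Complex.conj_conj]
  ring

lemma pieceAB (hc : c 1 = 0) (hd : d 1 = 0) :
    ∑ φ : MChar p, ∑ χ : MChar p, ∑ ψ : MChar p, ∑ ω : MChar p,
        (if (φ * χ = ψ * ω) ∧ φ = χ⁻¹ ∧ φ = ψ then t4 c d φ χ ψ ω else 0)
      = ∑ φ : MChar p, (c φ * d φ⁻¹) * (starRingEnd ℂ) (c φ * d φ⁻¹) := by
  have hiff : ∀ φ χ ψ ω : MChar p,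
      ((φ * χ = ψ * ω) ∧ φ = χ⁻¹ ∧ φ = ψ) ↔ (χ = φ⁻¹ ∧ ψ = φ ∧ ω = φ⁻¹) := by
    intro φ χ ψ ω
    constructor
    · rintro ⟨hP, hA, hB⟩
      have hχ : χ = φ⁻¹ := by rw [hA, inv_inv]
      have h1 : φ * χ = 1 := by rw [hχ, mul_inv_cancel]
      rw [h1, ← hB] at hP
      exact ⟨hχ, hB.symm, eq_inv_of_mul_eq_one_right hP.symm⟩
    · rintro ⟨hχ, hψ, hω⟩
      subst hχ; subst hψ; subst hω
      exact ⟨rfl, by rw [inv_inv], rfl⟩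
  simp only [hiff]
  have hcol := collapse1 (t4 c d) (fun _ => True) (fun φ => φ⁻¹) (fun φ => φ) (fun φ => φ⁻¹)
  simp only [true_and, if_true] at hcol
  rw [hcol]
  refine Finset.sum_congr rfl fun φ _ => ?_
  rw [t4]
  have h1 : c φ * d φ⁻¹ * (starRingEnd ℂ) (c φ * d φ⁻¹) *
        (gauss p φ * gauss p φ⁻¹ * (starRingEnd ℂ) (gauss p φ * gauss p φ⁻¹))
      = ((c φ * d φ⁻¹) * (starRingEnd ℂ) (c φ * d φ⁻¹)) *
        ((gauss p φ * gauss p φ⁻¹) * (starRingEnd ℂ) (gauss p φ * gauss p φ⁻¹)) := by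
    ring
  rw [h1, gauss_pair_norm (A := fun φ => (c φ * d φ⁻¹) * (starRingEnd ℂ) (c φ * d φ⁻¹))
    (by simp [hc]) φ]
  have hp2 : ((p:ℂ))^2 ≠ 0 := pow_ne_zero 2 hp0
  rw [div_eq_iff hp2]

lemma pieceAC (hc : c 1 = 0) (hd : d 1 = 0) :
    ∑ φ : MChar p, ∑ χ : MChar p, ∑ ψ : MChar p, ∑ ω : MChar p,
        (if (φ * χ = ψ * ω) ∧ φ = χ⁻¹ ∧ φ = ω then t4 c d φ χ ψ ω else 0)
      = ∑ φ : MChar p, c φ * (starRingEnd ℂ) (c φ⁻¹) * d φ⁻¹ * (starRingEnd ℂ) (d φ) := by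
  have hiff : ∀ φ χ ψ ω : MChar p,
      ((φ * χ = ψ * ω) ∧ φ = χ⁻¹ ∧ φ = ω) ↔ (χ = φ⁻¹ ∧ ψ = φ⁻¹ ∧ ω = φ) := by
    intro φ χ ψ ω
    constructor
    · rintro ⟨hP, hA, hC⟩
      have hχ : χ = φ⁻¹ := by rw [hA, inv_inv]
      have h1 : φ * χ = 1 := by rw [hχ, mul_inv_cancel]
      rw [h1, ← hC] at hP
      exact ⟨hχ, eq_inv_of_mul_eq_one_left hP.symm, hC.symm⟩
    · rintro ⟨hχ, hψ, hω⟩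
      subst hχ; subst hψ; subst hω
      exact ⟨by rw [mul_inv_cancel, inv_mul_cancel], by rw [inv_inv], rfl⟩
  simp only [hiff]
  have hcol := collapse1 (t4 c d) (fun _ => True) (fun φ => φ⁻¹) (fun φ => φ⁻¹) (fun φ => φ)
  simp only [true_and, if_true] at hcol
  rw [hcol]
  refine Finset.sum_congr rfl fun φ _ => ?_
  rw [t4]
  have h1 : c φ * d φ⁻¹ * (starRingEnd ℂ) (c φ⁻¹ * d φ) *
        (gauss p φ * gauss p φ⁻¹ * (starRingEnd ℂ) (gauss p φ⁻¹ * gauss p φ))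
      = ((c φ * d φ⁻¹ * (starRingEnd ℂ) (c φ⁻¹ * d φ))) *
        ((gauss p φ * gauss p φ⁻¹) * (starRingEnd ℂ) (gauss p φ * gauss p φ⁻¹)) := by
    rw [map_mul, map_mul, map_mul]
    ring
  rw [h1, gauss_pair_norm (A := fun φ => c φ * d φ⁻¹ * (starRingEnd ℂ) (c φ⁻¹ * d φ))
    (by simp [hc]) φ]
  have hp2 : ((p:ℂ))^2 ≠ 0 := pow_ne_zero 2 hp0
  rw [map_mul]
  rw [div_eq_iff hp2]
  ring

lemma pieceBC (hc : c 1 = 0) (hd : d 1 = 0) :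
    ∑ φ : MChar p, ∑ χ : MChar p, ∑ ψ : MChar p, ∑ ω : MChar p,
        (if (φ * χ = ψ * ω) ∧ φ = ψ ∧ φ = ω then t4 c d φ χ ψ ω else 0)
      = ∑ φ : MChar p, (c φ * d φ) * (starRingEnd ℂ) (c φ * d φ) := by
  have hiff : ∀ φ χ ψ ω : MChar p,
      ((φ * χ = ψ * ω) ∧ φ = ψ ∧ φ = ω) ↔ (χ = φ ∧ ψ = φ ∧ ω = φ) := by
    intro φ χ ψ ω
    constructor
    · rintro ⟨hP, hB, hC⟩
      rw [← hB, ← hC] at hP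
      exact ⟨mul_left_cancel hP, hB.symm, hC.symm⟩
    · rintro ⟨hχ, hψ, hω⟩
      subst hχ; subst hψ; subst hω
      exact ⟨rfl, rfl, rfl⟩
  simp only [hiff]
  have hcol := collapse1 (t4 c d) (fun _ => True) (fun φ => φ) (fun φ => φ) (fun φ => φ)
  simp only [true_and, if_true] at hcol
  rw [hcol]
  refine Finset.sum_congr rfl fun φ _ => ?_
  rw [t4]
  have h1 : c φ * d φ * (starRingEnd ℂ) (c φ * d φ) *
        (gauss p φ * gauss p φ * (starRingEnd ℂ) (gauss p φ * gauss p φ))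
      = ((c φ * d φ) * (starRingEnd ℂ) (c φ * d φ)) *
        ((gauss p φ * gauss p φ) * (starRingEnd ℂ) (gauss p φ * gauss p φ)) := by
    ring
  rw [h1, gauss_norm2 (A := fun φ => (c φ * d φ) * (starRingEnd ℂ) (c φ * d φ))
    (by simp [hc]) φ]
  have hp2 : ((p:ℂ))^2 ≠ 0 := pow_ne_zero 2 hp0
  rw [div_eq_iff hp2]

lemma pieceABC (hc : c 1 = 0) (hd : d 1 = 0) :
    ∑ φ : MChar p, ∑ χ : MChar p, ∑ ψ : MChar p, ∑ ω : MChar p,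
        (if (φ * χ = ψ * ω) ∧ φ = χ⁻¹ ∧ φ = ψ ∧ φ = ω then t4 c d φ χ ψ ω else 0)
      = (c (quadChar p) * d (quadChar p)) * (starRingEnd ℂ) (c (quadChar p) * d (quadChar p)) := by
  have hiff : ∀ φ χ ψ ω : MChar p,
      ((φ * χ = ψ * ω) ∧ φ = χ⁻¹ ∧ φ = ψ ∧ φ = ω) ↔ (φ * φ = 1 ∧ χ = φ ∧ ψ = φ ∧ ω = φ) := by
    intro φ χ ψ ω
    constructor
    · rintro ⟨hP, hA, hB, hC⟩
      rw [← hB, ← hC] at hP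
      have hχ : χ = φ := mul_left_cancel hP
      have hsq : φ * φ = 1 := by
        nth_rewrite 2 [hA]
        rw [← hχ, mul_inv_cancel]
      exact ⟨hsq, hχ, hB.symm, hC.symm⟩
    · rintro ⟨hsq, hχ, hψ, hω⟩
      subst hχ; subst hψ; subst hω
      exact ⟨rfl, eq_inv_of_mul_eq_one_left hsq, rfl, rfl⟩
  simp only [hiff]
  rw [collapse1sq (t4 c d)]
  have hval : ∀ φ : MChar p, φ ≠ 1 → φ * φ = 1 →
      t4 c d φ φ φ φ = (c φ * d φ) * (starRingEnd ℂ) (c φ * d φ) := by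
    intro φ hφ1 hsq
    have hinv : φ⁻¹ = φ := inv_eq_of_mul_eq_one_left hsq
    rw [t4]
    have h1 : c φ * d φ * (starRingEnd ℂ) (c φ * d φ) *
          (gauss p φ * gauss p φ * (starRingEnd ℂ) (gauss p φ * gauss p φ))
        = ((c φ * d φ) * (starRingEnd ℂ) (c φ * d φ)) *
          ((gauss p φ * gauss p φ⁻¹) * (starRingEnd ℂ) (gauss p φ * gauss p φ⁻¹)) := by
      rw [hinv]
    rw [h1, conj_gauss_pair φ hφ1, gauss_mul_inv φ hφ1]
    have h2 := chi_neg_one_sq φ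
    have hp2 : ((p:ℂ))^2 ≠ 0 := pow_ne_zero 2 hp0
    rw [div_eq_iff hp2]
    calc c φ * d φ * (starRingEnd ℂ) (c φ * d φ) * (φ (-1) * ↑p * (φ (-1) * ↑p))
        = (φ (-1) * φ (-1)) * (c φ * d φ * (starRingEnd ℂ) (c φ * d φ) * (p:ℂ)^2) := by ring
      _ = c φ * d φ * (starRingEnd ℂ) (c φ * d φ) * (p:ℂ)^2 := by rw [h2, one_mul]
  by_cases hq : quadChar p = 1
  · have hcond : ∀ φ : MChar p, (φ * φ = 1) ↔ (φ = 1) := by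
      intro φ
      rw [sq_eq_one_iff', hq, or_self]
    rw [Finset.sum_congr rfl fun φ _ => if_congr (hcond φ) rfl rfl]
    rw [Finset.sum_ite_eq' Finset.univ (1 : MChar p) (fun φ => t4 c d φ φ φ φ)]
    rw [hq, t4]
    simp [hc]
  · have hcond : ∀ φ : MChar p,
        (if φ * φ = 1 then t4 c d φ φ φ φ else 0)
          = (if φ = 1 then t4 c d φ φ φ φ else 0)
            + (if φ = quadChar p then t4 c d φ φ φ φ else 0) := by
      intro φ
      by_cases h1 : φ = 1
      · rw [if_pos ((sq_eq_one_iff' φ).mpr (Or.inl h1)), if_pos h1,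
          if_neg (by rw [h1]; exact fun h => hq h.symm), add_zero]
      · by_cases h2 : φ = quadChar p
        · rw [if_pos ((sq_eq_one_iff' φ).mpr (Or.inr h2)), if_neg h1, if_pos h2, zero_add]
        · rw [if_neg (fun h => by rcases (sq_eq_one_iff' φ).mp h with h' | h' <;> tauto),
            if_neg h1, if_neg h2, add_zero]
    rw [Finset.sum_congr rfl fun φ _ => hcond φ, Finset.sum_add_distrib,
      Finset.sum_ite_eq' Finset.univ (1 : MChar p) (fun φ => t4 c d φ φ φ φ),
      Finset.sum_ite_eq' Finset.univ (quadChar p) (fun φ => t4 c d φ φ φ φ)]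
    have hz : t4 c d 1 1 1 1 = 0 := by rw [t4]; simp [hc]
    have hsq : quadChar p * quadChar p = 1 := quad_sq
    simp only [Finset.mem_univ, if_true]
    rw [hz, zero_add, hval (quadChar p) hq hsq]


lemma ie4 (c d : MChar p → ℂ) (φ χ ψ ω : MChar p) :
    (if φ * χ = ψ * ω then t4 c d φ χ ψ ω else 0)
      = (if φ * χ = ψ * ω ∧ φ ≠ χ⁻¹ ∧ φ ≠ ψ ∧ φ ≠ ω then t4 c d φ χ ψ ω else 0)
        + ((if (φ * χ = ψ * ω) ∧ φ = χ⁻¹ then t4 c d φ χ ψ ω else 0)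
          + (if (φ * χ = ψ * ω) ∧ φ = ψ then t4 c d φ χ ψ ω else 0)
          + (if (φ * χ = ψ * ω) ∧ φ = ω then t4 c d φ χ ψ ω else 0)
          - (if (φ * χ = ψ * ω) ∧ φ = χ⁻¹ ∧ φ = ψ then t4 c d φ χ ψ ω else 0)
          - (if (φ * χ = ψ * ω) ∧ φ = χ⁻¹ ∧ φ = ω then t4 c d φ χ ψ ω else 0)
          - (if (φ * χ = ψ * ω) ∧ φ = ψ ∧ φ = ω then t4 c d φ χ ψ ω else 0)
          + (if (φ * χ = ψ * ω) ∧ φ = χ⁻¹ ∧ φ = ψ ∧ φ = ω then t4 c d φ χ ψ ω else 0)) := by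
  by_cases hP : φ * χ = ψ * ω <;> by_cases hA : φ = χ⁻¹ <;> by_cases hB : φ = ψ <;>
    by_cases hC : φ = ω <;> simp [hP, hA, hB, hC] <;> ring

lemma partC {c d : MChar p → ℂ} (hc : IsCharCombo p c) (hd : IsCharCombo p d) :
    ∑ φ : MChar p, ∑ χ : MChar p, ∑ ψ : MChar p, ∑ ω : MChar p,
        (if φ * χ = ψ * ω then t4 c d φ χ ψ ω else 0)
      = (∑ φ : MChar p, ∑ χ : MChar p, ∑ ψ : MChar p, ∑ ω : MChar p,
          if φ * χ = ψ * ω ∧ φ ≠ χ⁻¹ ∧ φ ≠ ψ ∧ φ ≠ ω then t4 c d φ χ ψ ω else 0)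
        - (∑ φ : MChar p, (c φ * d φ) * (starRingEnd ℂ) (c φ * d φ))
        - (∑ φ : MChar p, (c φ * d φ⁻¹) * (starRingEnd ℂ) (c φ * d φ⁻¹))
        - (∑ φ : MChar p, c φ * (starRingEnd ℂ) (c φ⁻¹) * d φ⁻¹ * (starRingEnd ℂ) (d φ))
        + (c (quadChar p) * d (quadChar p)) * (starRingEnd ℂ) (c (quadChar p) * d (quadChar p))
        + 1
        + (∑ φ : MChar p, c φ * (starRingEnd ℂ) (d φ)) *
            (starRingEnd ℂ) (∑ φ : MChar p, c φ * (starRingEnd ℂ) (d φ))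
        + ((∑ φ : MChar p, c φ * d φ⁻¹ * φ (-1)) *
            (starRingEnd ℂ) (∑ φ : MChar p, c φ * d φ⁻¹ * φ (-1))) := by
  rw [Finset.sum_congr rfl fun φ _ => Finset.sum_congr rfl fun χ _ =>
    Finset.sum_congr rfl fun ψ _ => Finset.sum_congr rfl fun ω _ => ie4 c d φ χ ψ ω]
  simp only [Finset.sum_add_distrib, Finset.sum_sub_distrib]
  rw [pieceA hc.1 hd.1, pieceB hc hd, pieceC hc.1 hd.1, pieceAB hc.1 hd.1,
    pieceAC hc.1 hd.1, pieceBC hc.1 hd.1, pieceABC hc.1 hd.1]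
  ring

lemma Rdiv (c d : MChar p → ℂ) :
    (∑ φ : MChar p, ∑ χ : MChar p, ∑ ψ : MChar p, ∑ ω : MChar p,
        (if φ * χ = ψ * ω then
          c φ * d χ * (starRingEnd ℂ) (c ψ * d ω) *
            (gauss p φ * gauss p χ * (starRingEnd ℂ) (gauss p ψ * gauss p ω))
        else 0)) / (p : ℂ) ^ 2
      = ∑ φ : MChar p, ∑ χ : MChar p, ∑ ψ : MChar p, ∑ ω : MChar p,
          (if φ * χ = ψ * ω then t4 c d φ χ ψ ω else 0) := by
  simp only [Finset.sum_div]
  refine Finset.sum_congr rfl fun φ _ => Finset.sum_congr rfl fun χ _ =>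
    Finset.sum_congr rfl fun ψ _ => Finset.sum_congr rfl fun ω _ => ?_
  rw [t4]
  split <;> simp

lemma castPC (c d : MChar p → ℂ) :
    ((∑ a : ZMod p, norm (PC p (combFun p c) (combFun p d) a) ^ 2 : ℝ) : ℂ)
      = ∑ a : ZMod p, PC p (combFun p c) (combFun p d) a *
          (starRingEnd ℂ) (PC p (combFun p c) (combFun p d) a) := by
  push_cast
  exact Finset.sum_congr rfl fun a _ => by rw [mul_conj']; push_cast; ring

lemma hp1 : ((p : ℂ) - 1) ≠ 0 := by
  have h2 := (Fact.out : p.Prime).two_le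
  intro h
  have : (p : ℂ) = 1 := by linear_combination h
  have : (p : ℕ) = 1 := by exact_mod_cast this
  omega

lemma part1 {c d : MChar p → ℂ} (hc : IsCharCombo p c) (hd : IsCharCombo p d) :
    ((1 : ℂ) / ((p : ℂ) * ((p : ℂ) - 1))) *
        ((∑ a : ZMod p, norm (PC p (combFun p c) (combFun p d) a) ^ 2 : ℝ) : ℂ)
      = ∑ φ : MChar p, ∑ χ : MChar p, ∑ ψ : MChar p, ∑ ω : MChar p,
          (if φ * χ = ψ * ω then t4 c d φ χ ψ ω else 0) := by
  rw [castPC, stepA1]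
  have hA2 := stepA2 c d
  have hB := stepB c d hc.1 hd.1
  have hQ : (p:ℂ) * (∑ x : ZMod p, ∑ v : ZMod p, ∑ y : ZMod p,
      (combFun p c x * (starRingEnd ℂ) (combFun p c y)) *
        (combFun p d v * (starRingEnd ℂ) (combFun p d (x - y + v)))) =
      ((p:ℂ) - 1) * ∑ φ : MChar p, ∑ χ : MChar p, ∑ ψ : MChar p, ∑ ω : MChar p,
        (if φ * χ = ψ * ω then
          c φ * d χ * (starRingEnd ℂ) (c ψ * d ω) *
            (gauss p φ * gauss p χ * (starRingEnd ℂ) (gauss p ψ * gauss p ω))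
        else 0) := by
    rw [← hA2, hB]
  rw [← Rdiv c d]
  rw [div_mul_eq_mul_div, one_mul, div_eq_div_iff (mul_ne_zero hp0 hp1) (pow_ne_zero 2 hp0)]
  linear_combination (p:ℂ) * hQ

lemma sum_hat_norm {c : MChar p → ℂ} (hc : IsCharCombo p c) :
    ∑ t : ZMod p, hatC c t * (starRingEnd ℂ) (hatC c t) = ((p:ℂ) - 1) * (p : ℂ) := by
  calc ∑ t : ZMod p, hatC c t * (starRingEnd ℂ) (hatC c t)
      = ∑ t : ZMod p, ∑ φ : MChar p, ∑ ψ : MChar p,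
          ((c φ * (starRingEnd ℂ) (c ψ)) * (gauss p φ * (starRingEnd ℂ) (gauss p ψ)))
            * ((φ⁻¹ * ψ) t) := by
        refine Finset.sum_congr rfl fun t _ => ?_
        rw [conj_hatC c hc.1 t, hatC_eq c hc.1 t, Finset.sum_mul_sum]
        refine Finset.sum_congr rfl fun φ _ => Finset.sum_congr rfl fun ψ _ => ?_
        rw [mchar_mul_apply]
        ring
    _ = ∑ φ : MChar p, ∑ ψ : MChar p,
          ((c φ * (starRingEnd ℂ) (c ψ)) * (gauss p φ * (starRingEnd ℂ) (gauss p ψ)))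
            * ∑ t : ZMod p, ((φ⁻¹ * ψ) t) := by
        rw [Finset.sum_comm]
        refine Finset.sum_congr rfl fun φ _ => ?_
        rw [Finset.sum_comm]
        exact Finset.sum_congr rfl fun ψ _ => (Finset.mul_sum _ _ _).symm
    _ = ∑ φ : MChar p, ∑ ψ : MChar p,
          (if ψ = φ then ((c φ * (starRingEnd ℂ) (c ψ)) *
            (gauss p φ * (starRingEnd ℂ) (gauss p ψ)))  * ((p:ℂ) - 1) else 0) := by
        refine Finset.sum_congr rfl fun φ _ => Finset.sum_congr rfl fun ψ _ => ?_
        rw [sum_char]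
        have hcond : (φ⁻¹ * ψ = 1) ↔ (ψ = φ) := by
          rw [inv_mul_eq_one, eq_comm]
        by_cases h : ψ = φ
        · rw [if_pos (hcond.mpr h), if_pos h]
        · rw [if_neg (fun hz => h (hcond.mp hz)), if_neg h, mul_zero]
    _ = ∑ φ : MChar p, ((c φ * (starRingEnd ℂ) (c φ)) *
          (gauss p φ * (starRingEnd ℂ) (gauss p φ))) * ((p:ℂ) - 1) := by
        refine Finset.sum_congr rfl fun φ _ => ?_
        exact (Finset.sum_ite_eq' Finset.univ φ _).trans (by simp)
    _ = ∑ φ : MChar p, ((c φ * (starRingEnd ℂ) (c φ)) * (p : ℂ)) * ((p:ℂ) - 1) := by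
        refine Finset.sum_congr rfl fun φ _ => ?_
        rw [gauss_replace (A := fun φ => c φ * (starRingEnd ℂ) (c φ)) (by simp [show c 1 = 0 from hc.1]) φ]
    _ = ((p:ℂ) - 1) * (p : ℂ) := by
        rw [← Finset.sum_mul, ← Finset.sum_mul, sum_mul_conj, hc.2]
        push_cast
        ring


lemma hatC_zero {c : MChar p → ℂ} (hc1 : c 1 = 0) : hatC c 0 = 0 := by
  rw [hatC_eq c hc1]
  refine Finset.sum_eq_zero fun φ _ => ?_
  rw [MulChar.map_nonunit _ not_isUnit_zero]
  ring

lemma sum_q_sq {c : MChar p → ℂ} (hc : IsCharCombo p c) :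
    (∑ a : ZMod p, norm (PC p (combFun p c) (combFun p c) a) ^ 2) * (p:ℝ)
      = ∑ t : ZMod p, (norm (hatC c t) ^ 2) ^ 2 := by
  have h3 : ((∑ a : ZMod p, norm (PC p (combFun p c) (combFun p c) a) ^ 2 : ℝ) : ℂ)
      = ∑ x : ZMod p, ∑ v : ZMod p, ∑ y : ZMod p,
          (combFun p c x * (starRingEnd ℂ) (combFun p c y)) *
            (combFun p c v * (starRingEnd ℂ) (combFun p c (x - y + v))) := by
    rw [castPC, stepA1]
  have h2 := stepA2 c c
  have h4 : ((∑ a : ZMod p, norm (PC p (combFun p c) (combFun p c) a) ^ 2 : ℝ) : ℂ)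
        * (p : ℂ)
      = ((∑ t : ZMod p, (norm (hatC c t) ^ 2) ^ 2 : ℝ) : ℂ) := by
    rw [h3, mul_comm, ← h2]
    push_cast
    refine Finset.sum_congr rfl fun t _ => ?_
    rw [mul_conj' (hatC c t)]
    push_cast
    ring
  exact_mod_cast h4

lemma sum_q {c : MChar p → ℂ} (hc : IsCharCombo p c) :
    ∑ t : ZMod p, norm (hatC c t) ^ 2 = (p:ℝ) * ((p:ℝ) - 1) := by
  have h1 : ((∑ t : ZMod p, norm (hatC c t) ^ 2 : ℝ) : ℂ)
      = ((p:ℂ) - 1) * (p:ℂ) := by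
    rw [← sum_hat_norm hc]
    push_cast
    exact Finset.sum_congr rfl fun t _ => by rw [mul_conj' (hatC c t)]; push_cast; ring
  have h2 : ((∑ t : ZMod p, norm (hatC c t) ^ 2 : ℝ) : ℂ)
      = (((p:ℝ) * ((p:ℝ) - 1) : ℝ) : ℂ) := by
    rw [h1]; push_cast; ring
  exact_mod_cast h2

lemma r_ge {c : MChar p → ℂ} (hc : IsCharCombo p c) :
    (p:ℝ) * ((p:ℝ) - 1)
      ≤ ∑ a : ZMod p, norm (PC p (combFun p c) (combFun p c) a) ^ 2 := by
  set q : ZMod p → ℝ := fun t => norm (hatC c t) ^ 2 with hqdef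
  have hq0 : q 0 = 0 := by simp [hqdef, hatC_zero hc.1]
  set s : Finset (ZMod p) := Finset.univ.erase 0 with hs
  have hcard : (s.card : ℝ) = (p:ℝ) - 1 := by
    rw [hs, Finset.card_erase_of_mem (Finset.mem_univ _), Finset.card_univ, ZMod.card]
    have := (Fact.out : p.Prime).two_le
    push_cast [Nat.cast_sub (by omega : 1 ≤ p)]
    ring
  have hsum1 : ∑ t ∈ s, q t = (p:ℝ) * ((p:ℝ) - 1) := by
    rw [hs, Finset.sum_erase _ hq0, sum_q hc]
  have hsum2 : ∑ t ∈ s, q t ^ 2 = ∑ t : ZMod p, q t ^ 2 := by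
    rw [hs, Finset.sum_erase _ (by rw [hq0]; norm_num)]
  have hcs := sq_sum_le_card_mul_sum_sq (s := s) (f := q)
  rw [hsum1, hsum2, ← sum_q_sq hc, hcard] at hcs
  have hp2 : (2:ℝ) ≤ (p:ℝ) := by exact_mod_cast (Fact.out : p.Prime).two_le
  have hpos : (0:ℝ) < (p:ℝ) * ((p:ℝ) - 1) := by nlinarith
  nlinarith [hcs, hpos]


/-- Proposition: mean square periodic crosscorrelation equals `S_{f,g} + 1 + U_{f,g} + V_{f,g}`;
and in the autocorrelation case this quantity is `S_{f,f} + 2 + V_{f,f} ≥ 1`. -/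
theorem mean_sq_periodic_correlation (p : ℕ) [Fact p.Prime] (c d : MChar p → ℂ)
    (hc : IsCharCombo p c) (hd : IsCharCombo p d) :
    ((1 : ℂ) / ((p : ℂ) * ((p : ℂ) - 1))) *
        (↑(∑ a : ZMod p, norm (PC p (combFun p c) (combFun p d) a) ^ 2 : ℝ) : ℂ)
      = Sparam p c d + 1 + (Uparam p c d : ℂ) + (Vparam p c d : ℂ) ∧
    (c = d →
      (Sparam p c c + 1 + (Uparam p c c : ℂ) + (Vparam p c c : ℂ)
          = Sparam p c c + 2 + (Vparam p c c : ℂ) ∧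
        (1 : ℂ) ≤ Sparam p c c + 2 + (Vparam p c c : ℂ))) := by
  have main : ∀ (c d : MChar p → ℂ), IsCharCombo p c → IsCharCombo p d →
      ((1 : ℂ) / ((p : ℂ) * ((p : ℂ) - 1))) *
        (↑(∑ a : ZMod p, norm (PC p (combFun p c) (combFun p d) a) ^ 2 : ℝ) : ℂ)
      = Sparam p c d + 1 + (Uparam p c d : ℂ) + (Vparam p c d : ℂ) := by
    intro c d hc hd
    rw [part1 hc hd, partC hc hd, Sparam, Uparam, Vparam]
    rw [← sum_mul_conj (fun φ => c φ * d φ), ← sum_mul_conj (fun φ => c φ * d φ⁻¹),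
      ← mul_conj' (c (quadChar p) * d (quadChar p)),
      ← mul_conj' (∑ φ : MChar p, c φ * (starRingEnd ℂ) (d φ)),
      ← mul_conj' (∑ φ : MChar p, c φ * d φ⁻¹ * φ (-1))]
    simp only [t4]
  refine ⟨main c d hc hd, fun hcd => ?_⟩
  subst hcd
  have hU : (Uparam p c c : ℂ) = 1 := by
    rw [Uparam]
    have h1 : ∑ φ : MChar p, c φ * (starRingEnd ℂ) (c φ) = 1 := by
      rw [sum_mul_conj, hc.2]
      norm_num
    rw [h1]
    norm_num
  constructor
  · rw [hU]; ring
  · have heq : Sparam p c c + 2 + (Vparam p c c : ℂ)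
        = ((1 : ℂ) / ((p : ℂ) * ((p : ℂ) - 1))) *
          (↑(∑ a : ZMod p, norm (PC p (combFun p c) (combFun p c) a) ^ 2 : ℝ) : ℂ) := by
      rw [main c c hc hc, hU]; ring
    rw [heq]
    have hp2 : (2:ℝ) ≤ (p:ℝ) := by exact_mod_cast (Fact.out : p.Prime).two_le
    have hpos : (0:ℝ) < (p:ℝ) * ((p:ℝ) - 1) := by nlinarith
    have hr := r_ge hc
    have hval : ((1 : ℂ) / ((p : ℂ) * ((p : ℂ) - 1))) *
          (↑(∑ a : ZMod p, norm (PC p (combFun p c) (combFun p c) a) ^ 2 : ℝ) : ℂ)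
        = (((1:ℝ) / ((p:ℝ) * ((p:ℝ) - 1)) *
            (∑ a : ZMod p, norm (PC p (combFun p c) (combFun p c) a) ^ 2) : ℝ) : ℂ) := by
      push_cast
      ring
    rw [hval, show (1:ℂ) = ((1:ℝ):ℂ) from by norm_num, Complex.real_le_real]
    rw [div_mul_eq_mul_div, one_mul, le_div_iff₀ hpos, one_mul]
    exact hr


end Pieces
end Aux

end Paper
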